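/- Let f be a convex function on [m,M], A₁,…,Aₙ self-adjoint operators with spectra in [m,M], Φ₁,…,Φₙ positive linear maps from B(H) to B(K) with ∑ⱼ Φⱼ(I_H) = I_K. Then f applied via functional calculus satisfies: f(mI_K + MI_K − ∑ⱼ Φⱼ(Aⱼ)) ≤ ((∑ⱼΦⱼ(Aⱼ) − mI_K)/(M−m))·f(m) + ((MI_K − ∑ⱼΦⱼ(Aⱼ))/(M−m))·f(M) ≤ (f(m)+f(M))·I_K − ∑ⱼ Φⱼ(f(Aⱼ)). -/

import Mathlib

lemma chord_bound {C : Type*} [CStarAlgebra C] [PartialOrder C] [StarOrderedRing C]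
    (m M : ℝ) (hmM : m < M) (f : ℝ → ℝ) (hconv : ConvexOn ℝ (Set.Icc m M) f)
    (hfc : ContinuousOn f (Set.Icc m M)) (x : C) (hx : IsSelfAdjoint x)
    (hl : algebraMap ℝ C m ≤ x) (hu : x ≤ algebraMap ℝ C M) :
    cfc f x ≤ (M - m)⁻¹ • (f m • (algebraMap ℝ C M - x) + f M • (x - algebraMap ℝ C m)) := by
  have hMm : M - m ≠ 0 := sub_ne_zero.2 hmM.ne'
  have hspec : spectrum ℝ x ⊆ Set.Icc m M := fun t ht =>
    ⟨(algebraMap_le_iff_le_spectrum hx).mp hl t ht,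
      (le_algebraMap_iff_spectrum_le hx).mp hu t ht⟩
  have hkey : ∀ t ∈ spectrum ℝ x,
      f t ≤ (fun t : ℝ => (M - m)⁻¹ • (f m • (M - t) + f M • (t - m))) t := by
    intro t ht
    obtain ⟨h1, h2⟩ := hspec ht
    have ha : (0:ℝ) ≤ (M - t)/(M - m) := div_nonneg (by linarith) (by linarith)
    have hb : (0:ℝ) ≤ (t - m)/(M - m) := div_nonneg (by linarith) (by linarith)
    have hab : (M - t)/(M - m) + (t - m)/(M - m) = 1 := by field_simp; ring
    have h := hconv.2 (Set.left_mem_Icc.2 hmM.le) (Set.right_mem_Icc.2 hmM.le) ha hb hab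
    have ht' : ((M - t)/(M - m)) • m + ((t - m)/(M - m)) • M = t := by
      simp only [smul_eq_mul]
      field_simp
      ring
    rw [ht'] at h
    refine h.trans_eq ?_
    simp only [smul_eq_mul]
    ring
  calc cfc f x ≤ cfc (fun t : ℝ => (M - m)⁻¹ • (f m • (M - t) + f M • (t - m))) x :=
        cfc_mono hkey (hfc.mono hspec) (by fun_prop)
    _ = _ := by
        have c1 : cfc (fun t : ℝ => M - t) x = algebraMap ℝ C M - x := by
          rw [cfc_sub (fun _ : ℝ => M) (fun t : ℝ => t) x (by fun_prop) (by fun_prop),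
            cfc_const M x, cfc_id' ℝ x]
        have c2 : cfc (fun t : ℝ => t - m) x = x - algebraMap ℝ C m := by
          rw [cfc_sub (fun t : ℝ => t) (fun _ : ℝ => m) x (by fun_prop) (by fun_prop),
            cfc_const m x, cfc_id' ℝ x]
        rw [cfc_smul ((M - m)⁻¹) (fun t : ℝ => f m • (M - t) + f M • (t - m)) x (by fun_prop),
          cfc_add (a := x) (fun t : ℝ => f m • (M - t)) (fun t : ℝ => f M • (t - m))
            (by fun_prop) (by fun_prop),
          cfc_smul (f m) (fun t : ℝ => M - t) x (by fun_prop),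
          cfc_smul (f M) (fun t : ℝ => t - m) x (by fun_prop), c1, c2]

theorem operator_jensen_mercer
    {A B : Type*}
    [CStarAlgebra A] [PartialOrder A] [StarOrderedRing A]
    [CStarAlgebra B] [PartialOrder B] [StarOrderedRing B]
    (m M : ℝ) (hmM : m < M)
    (f : ℝ → ℝ) (hconv : ConvexOn ℝ (Set.Icc m M) f)
    (hfc : ContinuousOn f (Set.Icc m M))
    (n : ℕ) (a : Fin n → A) (hsa : ∀ j, IsSelfAdjoint (a j))
    (hlb : ∀ j, algebraMap ℝ A m ≤ a j) (hub : ∀ j, a j ≤ algebraMap ℝ A M)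
    (Φ : Fin n → A →ₗ[ℝ] B)
    (hpos : ∀ j, ∀ x : A, 0 ≤ x → 0 ≤ Φ j x)
    (hnorm : ∑ j, Φ j 1 = 1) :
    cfc f (algebraMap ℝ B m + algebraMap ℝ B M - ∑ j, Φ j (a j)) ≤
      (M - m)⁻¹ • (f m • ((∑ j, Φ j (a j)) - algebraMap ℝ B m) +
        f M • (algebraMap ℝ B M - ∑ j, Φ j (a j))) ∧
    (M - m)⁻¹ • (f m • ((∑ j, Φ j (a j)) - algebraMap ℝ B m) +
        f M • (algebraMap ℝ B M - ∑ j, Φ j (a j))) ≤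
      (f m + f M) • (1 : B) - ∑ j, Φ j (cfc f (a j)) := by
  have hMm : M - m ≠ 0 := sub_ne_zero.2 hmM.ne'
  have hΦmono : ∀ j, ∀ {x y : A}, x ≤ y → Φ j x ≤ Φ j y := by
    intro j x y h
    have h2 := hpos j (y - x) (sub_nonneg.2 h)
    rw [map_sub] at h2
    exact sub_nonneg.mp h2
  have hsumM : ∑ j, Φ j (algebraMap ℝ A M) = algebraMap ℝ B M := by
    simp only [Algebra.algebraMap_eq_smul_one, map_smul, ← Finset.smul_sum, hnorm]
  have hsumm : ∑ j, Φ j (algebraMap ℝ A m) = algebraMap ℝ B m := by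
    simp only [Algebra.algebraMap_eq_smul_one, map_smul, ← Finset.smul_sum, hnorm]
  set S := ∑ j, Φ j (a j) with hS
  have hSl : algebraMap ℝ B m ≤ S := by
    rw [← hsumm]
    exact Finset.sum_le_sum fun j _ => hΦmono j (hlb j)
  have hSu : S ≤ algebraMap ℝ B M := by
    rw [← hsumM]
    exact Finset.sum_le_sum fun j _ => hΦmono j (hub j)
  have hS_sa : IsSelfAdjoint S := by
    rw [hS]
    rw [IsSelfAdjoint, star_sum]
    refine Finset.sum_congr rfl fun j _ => ?_
    have hj : Φ j (a j) = Φ j (a j - algebraMap ℝ A m) + m • Φ j 1 := by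
      rw [map_sub, ← map_smul, ← Algebra.algebraMap_eq_smul_one]
      abel
    rw [hj]
    exact (((hpos j _ (sub_nonneg.2 (hlb j))).isSelfAdjoint).add
      ((IsSelfAdjoint.all m).smul (hpos j 1 zero_le_one).isSelfAdjoint)).star_eq
  set T := algebraMap ℝ B m + algebraMap ℝ B M - S with hT
  have hT_sa : IsSelfAdjoint T := by
    rw [hT]
    exact ((IsSelfAdjoint.algebraMap B (IsSelfAdjoint.all m)).add
      (IsSelfAdjoint.algebraMap B (IsSelfAdjoint.all M))).sub hS_sa
  have hTl : algebraMap ℝ B m ≤ T := by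
    rw [← sub_nonneg]
    have h := sub_nonneg.2 hSu
    convert h using 1
    rw [hT]; abel
  have hTu : T ≤ algebraMap ℝ B M := by
    rw [← sub_nonneg]
    have h := sub_nonneg.2 hSl
    convert h using 1
    rw [hT]; abel
  constructor
  · have h1 := chord_bound m M hmM f hconv hfc T hT_sa hTl hTu
    have e1 : algebraMap ℝ B M - T = S - algebraMap ℝ B m := by rw [hT]; abel
    have e2 : T - algebraMap ℝ B m = algebraMap ℝ B M - S := by rw [hT]; abel
    rw [e1, e2] at h1
    exact h1
  · have hBd : ∑ j, Φ j (cfc f (a j)) ≤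
        (M - m)⁻¹ • (f m • (algebraMap ℝ B M - S) + f M • (S - algebraMap ℝ B m)) := by
      calc ∑ j, Φ j (cfc f (a j))
          ≤ ∑ j, (M - m)⁻¹ • (f m • (Φ j (algebraMap ℝ A M) - Φ j (a j)) +
              f M • (Φ j (a j) - Φ j (algebraMap ℝ A m))) := by
            refine Finset.sum_le_sum fun j _ => ?_
            have h := hΦmono j (chord_bound m M hmM f hconv hfc (a j) (hsa j) (hlb j) (hub j))
            rwa [map_smul, map_add, map_smul, map_smul, map_sub, map_sub] at h
        _ = _ := by
            rw [hS]
            simp only [← Finset.smul_sum, Finset.sum_add_distrib, Finset.sum_sub_distrib,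
              hsumM, hsumm]
    have heq : (M - m)⁻¹ • (f m • (S - algebraMap ℝ B m) + f M • (algebraMap ℝ B M - S)) +
        (M - m)⁻¹ • (f m • (algebraMap ℝ B M - S) + f M • (S - algebraMap ℝ B m)) =
        (f m + f M) • (1 : B) := by
      simp only [Algebra.algebraMap_eq_smul_one]
      match_scalars <;> field_simp <;> ring
    calc (M - m)⁻¹ • (f m • (S - algebraMap ℝ B m) + f M • (algebraMap ℝ B M - S))
        = (f m + f M) • (1 : B) -
          (M - m)⁻¹ • (f m • (algebraMap ℝ B M - S) + f M • (S - algebraMap ℝ B m)) :=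
          eq_sub_of_add_eq heq
      _ ≤ (f m + f M) • (1 : B) - ∑ j, Φ j (cfc f (a j)) := sub_le_sub_left hBd _
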